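/- Let G be a countable group with sofic approximation 𝔖, and let T₁, T₂ be measure-preserving actions of G on standard probability spaces. If T₁ is weakly contained in T₂ and T₂ is sofic, then T₁ is sofic. -/

import Mathlib

open Filter Topology
open scoped ENNReal
open MeasureTheory (Measure MeasurePreserving IsProbabilityMeasure)

namespace SoficPaper

/-- The normalized Hamming distance between two permutations of a (finite) set `V`. -/
noncomputable def hammingDist {V : Type*} (g₁ g₂ : Equiv.Perm V) : ℝ :=
  (Set.ncard {v | g₁ v ≠ g₂ v} : ℝ) / (Nat.card V : ℝ)

/-- `γ` is an enumeration `(γ_i)_{i ≥ 1}` of the elements of `G`. -/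
def IsEnumeration {G : Type*} (γ : ℕ → G) : Prop :=
  (∀ g : G, ∃ i : ℕ, 1 ≤ i ∧ γ i = g) ∧
  ∀ i j : ℕ, 1 ≤ i → 1 ≤ j → γ i = γ j → i = j

open scoped Classical in
/-- The metric on `A^G` (with `A` carrying the discrete metric):
`d(t₁,t₂) = sup_i (1/i) · d_A(t₁(γ_i), t₂(γ_i))`.  (The `i = 0` term vanishes since `1/0 = 0`.) -/
noncomputable def seqDist {G A : Type*} (γ : ℕ → G) (t₁ t₂ : G → A) : ℝ :=
  ⨆ i : ℕ, (1 / (i : ℝ)) * (if t₁ (γ i) = t₂ (γ i) then 0 else 1)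

/-- The Kantorovich distance between two (probability) measures on `A^G`:
the infimum of `∫ d dξ` over all couplings `ξ`.  It metrizes the weak* topology. -/
noncomputable def kantorovich {G A : Type*} [MeasurableSpace A] (γ : ℕ → G)
    (μ₁ μ₂ : Measure (G → A)) : ℝ :=
  sInf { r : ℝ | ∃ ξ : Measure ((G → A) × (G → A)), IsProbabilityMeasure ξ ∧
    ξ.map Prod.fst = μ₁ ∧ ξ.map Prod.snd = μ₂ ∧ r = ∫ p, seqDist γ p.1 p.2 ∂ξ }

/-- The action of `G` on `X` is measure preserving for `μ`. -/
def IsPmpAction (G : Type*) [Group G] {X : Type*} [MeasurableSpace X] [MulAction G X]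
    (μ : Measure X) : Prop :=
  ∀ g : G, MeasurePreserving (fun x : X => g • x) μ μ

/-- `f^G : X → A^G`, `f^G(x)(g) = f(g • x)`. -/
def obsG (G : Type*) [Group G] {X A : Type*} [MulAction G X] (f : X → A) : X → G → A :=
  fun x g => f (g • x)

/-- `distr(f) = (f^G)_* μ`. -/
noncomputable def distr (G : Type*) [Group G] {X A : Type*} [MeasurableSpace X]
    [MeasurableSpace A] [MulAction G X] (μ : Measure X) (f : X → A) : Measure (G → A) :=
  μ.map (obsG G f)

/-- The metric on observables: `d(f₁,f₂) = μ {x | f₁ x ≠ f₂ x}`. -/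
noncomputable def obsDist {X A : Type*} [MeasurableSpace X] (μ : Measure X)
    (f₁ f₂ : X → A) : ℝ :=
  (μ {x | f₁ x ≠ f₂ x}).toReal

/-- `θ_{v,σ} : A^V → A^G`, `θ_{v,σ}(τ)(g) = τ(σ^g(v))`. -/
def theta {G V A : Type*} (σ : G → Equiv.Perm V) (v : V) (τ : V → A) : G → A :=
  fun g => τ (σ g v)

/-- `Θ_σ(η) = (1/|V|) ∑_{v ∈ V} (θ_{v,σ})_* η`. -/
noncomputable def Theta {G V A : Type*} [MeasurableSpace A] (σ : G → Equiv.Perm V)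
    (η : Measure (V → A)) : Measure (G → A) :=
  (Nat.card V : ℝ≥0∞)⁻¹ • MeasureTheory.Measure.sum (fun v : V => η.map (theta σ v))

/-- `((V_i), (σ_i))` is a sofic approximation of `G`. -/
def IsSoficApprox {G : Type*} [Group G] {V : ℕ → Type*}
    (σ : ∀ i, G → Equiv.Perm (V i)) : Prop :=
  (∀ g₁ g₂ : G, g₁ ≠ g₂ →
      Tendsto (fun i => hammingDist (σ i g₁) (σ i g₂)) atTop (𝓝 1)) ∧
  (∀ g₁ g₂ : G,
      Tendsto (fun i => hammingDist (σ i g₁ * σ i g₂) (σ i (g₁ * g₂))) atTop (𝓝 0))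

/-- A group is sofic if it admits a sofic approximation. -/
def SoficGroup (G : Type*) [Group G] : Prop :=
  ∃ (V : ℕ → Type) (σ : ∀ i, G → Equiv.Perm (V i)), (∀ i, Finite (V i)) ∧ IsSoficApprox σ

/-- `σ : G → Sym(V)` is `k`-good with respect to the enumeration `γ`. -/
def kGood {G : Type*} [Group G] (γ : ℕ → G) {V : Type*} (σ : G → Equiv.Perm V)
    (k : ℕ) : Prop :=
  (∀ i j : ℕ, 1 ≤ i → i < j → j ≤ k →
      hammingDist (σ (γ i)) (σ (γ j)) > 1 - 1 / (k : ℝ)) ∧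
  (∀ i j : ℕ, 1 ≤ i → i ≤ k → 1 ≤ j → j ≤ k →
      hammingDist (σ (γ i) * σ (γ j)) (σ (γ i * γ j)) < 1 / (k : ℝ))

/-- The action is `𝔖`-approximable: every observable admits microstates along the
full sequence, with `Θ_{σ_i}(δ_{τ_i}) → distr f` in the weak* topology (metrized by
the Kantorovich distance). -/
def Approximable (G : Type*) [Group G] (γ : ℕ → G) {X : Type*} [MeasurableSpace X]
    [MulAction G X] (μ : Measure X) {V : ℕ → Type}
    (σ : ∀ i, G → Equiv.Perm (V i)) : Prop :=
  ∀ (A : Type) [Fintype A] [MeasurableSpace A] [DiscreteMeasurableSpace A] (f : X → A),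
    Measurable f → ∃ τ : ∀ i, V i → A,
      Tendsto (fun i => kantorovich γ (Theta (σ i) (MeasureTheory.Measure.dirac (τ i)))
        (distr G μ f)) atTop (𝓝 0)

/-- The action is `𝔖`-weakly approximable: every observable admits microstates along
some subsequence. -/
def WeaklyApproximable (G : Type*) [Group G] (γ : ℕ → G) {X : Type*} [MeasurableSpace X]
    [MulAction G X] (μ : Measure X) {V : ℕ → Type}
    (σ : ∀ i, G → Equiv.Perm (V i)) : Prop :=
  ∀ (A : Type) [Fintype A] [MeasurableSpace A] [DiscreteMeasurableSpace A] (f : X → A),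
    Measurable f → ∃ φ : ℕ → ℕ, StrictMono φ ∧ ∃ τ : ∀ j, V (φ j) → A,
      Tendsto (fun j => kantorovich γ (Theta (σ (φ j)) (MeasureTheory.Measure.dirac (τ j)))
        (distr G μ f)) atTop (𝓝 0)

/-- A pmp action is sofic if it is weakly approximable with respect to some sofic
approximation of `G`. -/
def SoficAction (G : Type*) [Group G] (γ : ℕ → G) {X : Type*} [MeasurableSpace X]
    [MulAction G X] (μ : Measure X) : Prop :=
  ∃ (V : ℕ → Type) (σ : ∀ i, G → Equiv.Perm (V i)),
    (∀ i, Finite (V i)) ∧ IsSoficApprox σ ∧ WeaklyApproximable G γ μ σ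

/-- Weak containment of pmp actions: every observable of the first action has its
distribution approximated by distributions of observables of the second action. -/
def WeaklyContained (G : Type*) [Group G] (γ : ℕ → G) {X₁ X₂ : Type*}
    [MeasurableSpace X₁] [MeasurableSpace X₂] [MulAction G X₁] [MulAction G X₂]
    (μ₁ : Measure X₁) (μ₂ : Measure X₂) : Prop :=
  ∀ (A : Type) [Fintype A] [MeasurableSpace A] [DiscreteMeasurableSpace A] (f₁ : X₁ → A),
    Measurable f₁ → ∀ ε : ℝ, 0 < ε →
      ∃ f₂ : X₂ → A, Measurable f₂ ∧ kantorovich γ (distr G μ₂ f₂) (distr G μ₁ f₁) < ε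

/-- A tower of observables on `(X, μ)`. -/
structure ObsTower {X : Type*} [MeasurableSpace X] (μ : Measure X) where
  A : ℕ → Type
  [fintypeA : ∀ i, Fintype (A i)]
  [measA : ∀ i, MeasurableSpace (A i)]
  [discA : ∀ i, DiscreteMeasurableSpace (A i)]
  f : ∀ i, X → A i
  measf : ∀ i, Measurable (f i)
  π : ∀ i j, j < i → A i → A j
  compat : ∀ i j (h : j < i), ∀ᵐ x ∂μ, π i j h (f i x) = f j x
  π_comp : ∀ i j k (hij : i < j) (hjk : j < k),
    π j i hij ∘ π k j hjk = π k i (hij.trans hjk)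

attribute [instance] ObsTower.fintypeA ObsTower.measA ObsTower.discA

/-- Sufficiency of a sequence of observables: every observable is approximated, up to
any `ε > 0`, by a post-composition of some member of the sequence. -/
def SufficientSeq {X : Type*} [MeasurableSpace X] (μ : Measure X) (A : ℕ → Type)
    (f : ∀ i, X → A i) : Prop :=
  ∀ (B : Type) [Fintype B] [MeasurableSpace B] [DiscreteMeasurableSpace B] (g : X → B),
    Measurable g → ∀ ε : ℝ, 0 < ε →
      ∃ (i : ℕ) (π' : A i → B), (μ {x | π' (f i x) ≠ g x}).toReal < ε

/-- A sufficient tower of observables. -/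
def ObsTower.Sufficient {X : Type*} [MeasurableSpace X] {μ : Measure X}
    (T : ObsTower μ) : Prop :=
  SufficientSeq μ T.A T.f

/-- A pmp action of `G` on a standard probability space, bundled. -/
structure PmpSystem (G : Type*) [Group G] where
  X : Type
  [mX : MeasurableSpace X]
  [act : MulAction G X]
  sb : StandardBorelSpace X
  μ : Measure X
  prob : IsProbabilityMeasure μ
  pmp : IsPmpAction G μ

attribute [instance] PmpSystem.mX PmpSystem.act

/-- A universal sofic action: a sofic action weakly containing every sofic action. -/
def UniversalSoficAction (G : Type*) [Group G] (γ : ℕ → G) (S : PmpSystem G) : Prop :=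
  SoficAction G γ S.μ ∧
  ∀ T : PmpSystem G, SoficAction G γ T.μ → WeaklyContained G γ T.μ S.μ

/-- A maximal sofic approximation: a sofic approximation with respect to which every
universal sofic action is approximable. -/
def MaximalSoficApprox (G : Type*) [Group G] (γ : ℕ → G) {V : ℕ → Type}
    (σ : ∀ i, G → Equiv.Perm (V i)) : Prop :=
  (∀ i, Finite (V i)) ∧ IsSoficApprox σ ∧
  ∀ S : PmpSystem G, UniversalSoficAction G γ S → Approximable G γ S.μ σ

/-- The product of two measures on `ι → A`, viewed as a measure on `ι → A × A`. -/
noncomputable def pairMeasure {ι A : Type*} [MeasurableSpace A]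
    (η₁ η₂ : Measure (ι → A)) : Measure (ι → A × A) :=
  (η₁.prod η₂).map (fun p i => (p.1 i, p.2 i))

/-- The action is strongly sofic (admits a doubly-quenched approximation) with respect
to `((V_i), (σ_i))`. -/
def StronglySofic (G : Type*) [Group G] (γ : ℕ → G) {X : Type*} [MeasurableSpace X]
    [MulAction G X] (μ : Measure X) {V : ℕ → Type}
    (σ : ∀ i, G → Equiv.Perm (V i)) : Prop :=
  ∀ (A : Type) [Fintype A] [MeasurableSpace A] [DiscreteMeasurableSpace A] (f : X → A),
    Measurable f → ∃ η : ∀ i, Measure (V i → A),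
      (∀ i, IsProbabilityMeasure (η i)) ∧
      Tendsto (fun i => kantorovich γ (Theta (σ i) (pairMeasure (η i) (η i)))
          (pairMeasure (distr G μ f) (distr G μ f))) atTop (𝓝 0) ∧
      ∀ ε : ℝ, 0 < ε →
        Tendsto (fun i => pairMeasure (η i) (η i)
            {ξ : V i → A × A | kantorovich γ (Theta (σ i) (MeasureTheory.Measure.dirac ξ))
              (pairMeasure (distr G μ f) (distr G μ f)) < ε})
          atTop (𝓝 (1 : ℝ≥0∞))

/-! ### Auxiliary lemmas -/

section Aux

open MeasureTheory ProbabilityTheory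

open scoped Classical in
lemma seqDist_term_nonneg {G A : Type*} (γ : ℕ → G) (t₁ t₂ : G → A) (i : ℕ) :
    0 ≤ (1 / (i : ℝ)) * (if t₁ (γ i) = t₂ (γ i) then 0 else 1) := by
  split_ifs <;> positivity

open scoped Classical in
lemma seqDist_term_le_one {G A : Type*} (γ : ℕ → G) (t₁ t₂ : G → A) (i : ℕ) :
    (1 / (i : ℝ)) * (if t₁ (γ i) = t₂ (γ i) then 0 else 1) ≤ 1 := by
  rcases Nat.eq_zero_or_pos i with h | h
  · subst h; simp
  · have hi : (1:ℝ) ≤ i := by exact_mod_cast h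
    have : (1 / (i : ℝ)) ≤ 1 := by
      rw [div_le_one (by linarith)]; exact hi
    split_ifs <;> nlinarith

open scoped Classical in
lemma seqDist_bddAbove {G A : Type*} (γ : ℕ → G) (t₁ t₂ : G → A) :
    BddAbove (Set.range fun i : ℕ =>
      (1 / (i : ℝ)) * (if t₁ (γ i) = t₂ (γ i) then 0 else 1)) := by
  classical
  exact ⟨1, by rintro x ⟨i, rfl⟩; exact seqDist_term_le_one γ t₁ t₂ i⟩

lemma seqDist_nonneg {G A : Type*} (γ : ℕ → G) (t₁ t₂ : G → A) :
    0 ≤ seqDist γ t₁ t₂ :=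
  Real.iSup_nonneg (seqDist_term_nonneg γ t₁ t₂)

lemma seqDist_le_one {G A : Type*} (γ : ℕ → G) (t₁ t₂ : G → A) :
    seqDist γ t₁ t₂ ≤ 1 :=
  ciSup_le (seqDist_term_le_one γ t₁ t₂)

lemma seqDist_triangle {G A : Type*} (γ : ℕ → G) (t₁ t₂ t₃ : G → A) :
    seqDist γ t₁ t₃ ≤ seqDist γ t₁ t₂ + seqDist γ t₂ t₃ := by
  classical
  refine ciSup_le fun i => ?_
  have h12 := le_ciSup (seqDist_bddAbove γ t₁ t₂) i
  have h23 := le_ciSup (seqDist_bddAbove γ t₂ t₃) i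
  have key : (1 / (i : ℝ)) * (if t₁ (γ i) = t₃ (γ i) then 0 else 1) ≤
      (1 / (i : ℝ)) * (if t₁ (γ i) = t₂ (γ i) then 0 else 1) +
      (1 / (i : ℝ)) * (if t₂ (γ i) = t₃ (γ i) then 0 else 1) := by
    have hi : (0:ℝ) ≤ 1 / (i:ℝ) := by positivity
    by_cases h13 : t₁ (γ i) = t₃ (γ i)
    · rw [if_pos h13, mul_zero]
      have h1 := seqDist_term_nonneg γ t₁ t₂ i
      have h2 := seqDist_term_nonneg γ t₂ t₃ i
      linarith
    · by_cases h12' : t₁ (γ i) = t₂ (γ i)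
      · have h23' : t₂ (γ i) ≠ t₃ (γ i) := fun h => h13 (h12'.trans h)
        rw [if_neg h13, if_neg h23', if_pos h12', mul_zero, mul_one, zero_add]
      · simp only [if_neg h13, if_neg h12', mul_one]
        have := seqDist_term_nonneg γ t₂ t₃ i
        linarith
  calc (1 / (i : ℝ)) * (if t₁ (γ i) = t₃ (γ i) then 0 else 1)
      ≤ _ + _ := key
    _ ≤ seqDist γ t₁ t₂ + seqDist γ t₂ t₃ := by
        unfold seqDist; exact add_le_add h12 h23

lemma measurable_seqDist {G A : Type*} [MeasurableSpace A] [MeasurableSingletonClass A]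
    [Countable A] (γ : ℕ → G) :
    Measurable (fun p : (G → A) × (G → A) => seqDist γ p.1 p.2) := by
  classical
  unfold seqDist
  refine Measurable.iSup fun i => ?_
  refine Measurable.const_mul ?_ _
  refine Measurable.ite ?_ measurable_const measurable_const
  exact measurableSet_eq_fun
    (measurable_fst.eval) (measurable_snd.eval)

lemma integrable_seqDist_comp {G A : Type*} [MeasurableSpace A] [MeasurableSingletonClass A]
    [Countable A] (γ : ℕ → G) {Y : Type*} [MeasurableSpace Y] (ξ : Measure Y)
    [IsFiniteMeasure ξ] {F : Y → (G → A) × (G → A)} (hF : Measurable F) :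
    Integrable (fun y => seqDist γ (F y).1 (F y).2) ξ := by
  refine Integrable.mono' (integrable_const (1:ℝ))
    ((measurable_seqDist γ).comp hF).aestronglyMeasurable
    (Filter.Eventually.of_forall fun y => ?_)
  rw [Real.norm_eq_abs, abs_of_nonneg (seqDist_nonneg _ _ _)]
  exact seqDist_le_one _ _ _

end Aux
section Aux2

open MeasureTheory ProbabilityTheory

variable {G A : Type*} [MeasurableSpace A]

/-- The set of coupling integrals defining `kantorovich`. -/
def couplings (γ : ℕ → G) (μ₁ μ₂ : Measure (G → A)) : Set ℝ :=
  { r : ℝ | ∃ ξ : Measure ((G → A) × (G → A)), IsProbabilityMeasure ξ ∧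
    ξ.map Prod.fst = μ₁ ∧ ξ.map Prod.snd = μ₂ ∧ r = ∫ p, seqDist γ p.1 p.2 ∂ξ }

lemma kantorovich_eq_sInf (γ : ℕ → G) (μ₁ μ₂ : Measure (G → A)) :
    kantorovich γ μ₁ μ₂ = sInf (couplings γ μ₁ μ₂) := rfl

lemma couplings_nonneg (γ : ℕ → G) (μ₁ μ₂ : Measure (G → A)) :
    ∀ r ∈ couplings γ μ₁ μ₂, 0 ≤ r := by
  rintro r ⟨ξ, hξ, h1, h2, rfl⟩
  exact integral_nonneg fun p => seqDist_nonneg _ _ _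

lemma kantorovich_nonneg (γ : ℕ → G) (μ₁ μ₂ : Measure (G → A)) :
    0 ≤ kantorovich γ μ₁ μ₂ :=
  Real.sInf_nonneg (couplings_nonneg γ μ₁ μ₂)

lemma couplings_bddBelow (γ : ℕ → G) (μ₁ μ₂ : Measure (G → A)) :
    BddBelow (couplings γ μ₁ μ₂) :=
  ⟨0, fun r hr => couplings_nonneg γ μ₁ μ₂ r hr⟩

lemma couplings_nonempty (γ : ℕ → G) (μ₁ μ₂ : Measure (G → A))
    [IsProbabilityMeasure μ₁] [IsProbabilityMeasure μ₂] :
    (couplings γ μ₁ μ₂).Nonempty := by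
  refine ⟨∫ p, seqDist γ p.1 p.2 ∂(μ₁.prod μ₂), μ₁.prod μ₂, inferInstance, ?_, ?_, rfl⟩
  · simp [Measure.map_fst_prod]
  · simp [Measure.map_snd_prod]

lemma kantorovich_le_of_coupling (γ : ℕ → G) {μ₁ μ₂ : Measure (G → A)}
    {r : ℝ} (hr : r ∈ couplings γ μ₁ μ₂) :
    kantorovich γ μ₁ μ₂ ≤ r :=
  csInf_le (couplings_bddBelow γ μ₁ μ₂) hr

/-- If the first measure is the zero measure, there are no couplings, so the
Kantorovich distance is zero by the `sInf ∅ = 0` convention. -/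
lemma kantorovich_zero_left (γ : ℕ → G) (μ₂ : Measure (G → A)) :
    kantorovich γ (0 : Measure (G → A)) μ₂ = 0 := by
  rw [kantorovich_eq_sInf]
  convert Real.sInf_empty
  rw [Set.eq_empty_iff_forall_notMem]
  rintro r ⟨ξ, hξ, h1, h2, rfl⟩
  have h := congrArg (fun ν : Measure (G → A) => ν Set.univ) h1
  simp only [Measure.map_apply measurable_fst MeasurableSet.univ, Set.preimage_univ,
    Measure.coe_zero, Pi.zero_apply] at h
  rw [hξ.measure_univ] at h
  exact one_ne_zero h

end Aux2
section Triangle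

open MeasureTheory ProbabilityTheory

variable {G A : Type*} [Countable G] [MeasurableSpace A] [Fintype A]
  [DiscreteMeasurableSpace A] [Nonempty A]

lemma kantorovich_triangle (γ : ℕ → G) (μ₁ μ₂ μ₃ : Measure (G → A))
    [IsProbabilityMeasure μ₁] [IsProbabilityMeasure μ₂] [IsProbabilityMeasure μ₃] :
    kantorovich γ μ₁ μ₃ ≤ kantorovich γ μ₁ μ₂ + kantorovich γ μ₂ μ₃ := by
  have key : ∀ r₁ ∈ couplings γ μ₁ μ₂, ∀ r₂ ∈ couplings γ μ₂ μ₃,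
      kantorovich γ μ₁ μ₃ ≤ r₁ + r₂ := by
    rintro r₁ ⟨ξ₁, hξ₁, h₁f, h₁s, rfl⟩ r₂ ⟨ξ₂, hξ₂, h₂f, h₂s, rfl⟩
    haveI := hξ₁; haveI := hξ₂
    set κ : ProbabilityTheory.Kernel (G → A) (G → A) := ξ₂.condKernel with hκdef
    set ν : Measure (((G → A) × (G → A)) × (G → A)) :=
      ξ₁ ⊗ₘ (κ.comap Prod.snd measurable_snd) with hνdef
    have hdis : μ₂ ⊗ₘ κ = ξ₂ := by
      have := ξ₂.disintegrate ξ₂.condKernel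
      rwa [show ξ₂.fst = μ₂ from h₂f] at this
    have hfst : ν.map Prod.fst = ξ₁ := Measure.fst_compProd ξ₁ _
    have hmidm : Measurable (fun p : ((G → A) × (G → A)) × (G → A) => (p.1.2, p.2)) :=
      (measurable_fst.snd).prodMk measurable_snd
    have hmid : ν.map (fun p : ((G → A) × (G → A)) × (G → A) => (p.1.2, p.2)) = ξ₂ := by
      ext s hs
      rw [Measure.map_apply hmidm hs, hνdef, Measure.compProd_apply (hmidm hs)]
      have hmeasκ : Measurable fun b => κ b (Prod.mk b ⁻¹' s) :=
        ProbabilityTheory.Kernel.measurable_kernel_prodMk_left hs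
      trans ∫⁻ p : (G → A) × (G → A), κ p.2 (Prod.mk p.2 ⁻¹' s) ∂ξ₁
      · rfl
      rw [show ∫⁻ p, κ p.2 (Prod.mk p.2 ⁻¹' s) ∂ξ₁
            = ∫⁻ b, κ b (Prod.mk b ⁻¹' s) ∂(ξ₁.map Prod.snd) from
          (lintegral_map hmeasκ measurable_snd).symm, h₁s,
        ← Measure.compProd_apply hs, hdis]
    have hg : Measurable (fun p : ((G → A) × (G → A)) × (G → A) => (p.1.1, p.2)) :=
      (measurable_fst.fst).prodMk measurable_snd
    set ξ₃ : Measure ((G → A) × (G → A)) :=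
      ν.map (fun p : ((G → A) × (G → A)) × (G → A) => (p.1.1, p.2)) with hξ₃def
    haveI hξ₃prob : IsProbabilityMeasure ξ₃ := Measure.isProbabilityMeasure_map hg.aemeasurable
    have h₃f : ξ₃.map Prod.fst = μ₁ := by
      rw [hξ₃def, Measure.map_map measurable_fst hg]
      have : (Prod.fst ∘ fun p : ((G → A) × (G → A)) × (G → A) => (p.1.1, p.2))
          = (Prod.fst ∘ Prod.fst) := rfl
      rw [this, ← Measure.map_map measurable_fst measurable_fst, hfst, h₁f]
    have h₃s : ξ₃.map Prod.snd = μ₃ := by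
      rw [hξ₃def, Measure.map_map measurable_snd hg]
      have : (Prod.snd ∘ fun p : ((G → A) × (G → A)) × (G → A) => (p.1.1, p.2))
          = (Prod.snd ∘ fun p : ((G → A) × (G → A)) × (G → A) => (p.1.2, p.2)) := rfl
      rw [this, ← Measure.map_map measurable_snd hmidm, hmid, h₂s]
    have hint₁ : ∫ q, seqDist γ q.1.1 q.1.2 ∂ν = ∫ p, seqDist γ p.1 p.2 ∂ξ₁ := by
      rw [← hfst, integral_map measurable_fst.aemeasurable
        (measurable_seqDist γ).aestronglyMeasurable]
    have hint₂ : ∫ q, seqDist γ q.1.2 q.2 ∂ν = ∫ p, seqDist γ p.1 p.2 ∂ξ₂ := by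
      rw [← hmid, integral_map hmidm.aemeasurable
        (measurable_seqDist γ).aestronglyMeasurable]
    have hint₃ : ∫ p, seqDist γ p.1 p.2 ∂ξ₃ = ∫ q, seqDist γ q.1.1 q.2 ∂ν := by
      rw [hξ₃def, integral_map hg.aemeasurable
        (measurable_seqDist γ).aestronglyMeasurable]
    have hI₁ : Integrable (fun q : ((G → A) × (G → A)) × (G → A) =>
        seqDist γ q.1.1 q.1.2) ν :=
      integrable_seqDist_comp γ ν (measurable_fst.fst.prodMk measurable_fst.snd)
    have hI₂ : Integrable (fun q : ((G → A) × (G → A)) × (G → A) =>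
        seqDist γ q.1.2 q.2) ν :=
      integrable_seqDist_comp γ ν hmidm
    have hmono : ∫ q, seqDist γ q.1.1 q.2 ∂ν
        ≤ ∫ q, (seqDist γ q.1.1 q.1.2 + seqDist γ q.1.2 q.2) ∂ν := by
      refine integral_mono (integrable_seqDist_comp γ ν hg) (hI₁.add hI₂) fun q => ?_
      exact seqDist_triangle γ _ _ _
    have hmem : (∫ p, seqDist γ p.1 p.2 ∂ξ₃) ∈ couplings γ μ₁ μ₃ :=
      ⟨ξ₃, hξ₃prob, h₃f, h₃s, rfl⟩
    calc kantorovich γ μ₁ μ₃ ≤ ∫ p, seqDist γ p.1 p.2 ∂ξ₃ :=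
          kantorovich_le_of_coupling γ hmem
      _ = ∫ q, seqDist γ q.1.1 q.2 ∂ν := hint₃
      _ ≤ ∫ q, (seqDist γ q.1.1 q.1.2 + seqDist γ q.1.2 q.2) ∂ν := hmono
      _ = ∫ q, seqDist γ q.1.1 q.1.2 ∂ν + ∫ q, seqDist γ q.1.2 q.2 ∂ν :=
          integral_add hI₁ hI₂
      _ = ∫ p, seqDist γ p.1 p.2 ∂ξ₁ + ∫ p, seqDist γ p.1 p.2 ∂ξ₂ := by
          rw [hint₁, hint₂]
  refine le_of_forall_pos_le_add fun ε hε => ?_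
  obtain ⟨r₁, hr₁, hr₁lt⟩ := Real.lt_sInf_add_pos (couplings_nonempty γ μ₁ μ₂) (half_pos hε)
  obtain ⟨r₂, hr₂, hr₂lt⟩ := Real.lt_sInf_add_pos (couplings_nonempty γ μ₂ μ₃) (half_pos hε)
  have h := key r₁ hr₁ r₂ hr₂
  rw [kantorovich_eq_sInf γ μ₁ μ₂, kantorovich_eq_sInf γ μ₂ μ₃]
  linarith

end Triangle
section ThetaAux

open MeasureTheory ProbabilityTheory

lemma theta_measurable {G V A : Type*} [MeasurableSpace A] (σ : G → Equiv.Perm V) (v : V) :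
    Measurable (theta (A := A) σ v) :=
  measurable_pi_lambda _ fun _ => measurable_pi_apply _

lemma Theta_dirac_prob {G V A : Type*} [MeasurableSpace A] [Finite V] [Nonempty V]
    (σ : G → Equiv.Perm V) (τ : V → A) :
    IsProbabilityMeasure (Theta σ (MeasureTheory.Measure.dirac τ)) := by
  constructor
  rw [Theta, Measure.smul_apply, Measure.sum_apply _ MeasurableSet.univ]
  have h1 : ∀ v : V, ((MeasureTheory.Measure.dirac τ).map (theta σ v)) Set.univ = 1 := by
    intro v
    rw [Measure.map_apply (theta_measurable σ v) MeasurableSet.univ]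
    simp
  simp_rw [h1]
  have hcard : (Nat.card V : ℝ≥0∞) ≠ 0 := by
    simp [Nat.card_ne_zero.mpr ⟨‹Nonempty V›, ‹Finite V›⟩]
  have : ∑' _ : V, (1 : ℝ≥0∞) = (Nat.card V : ℝ≥0∞) := by
    haveI : Fintype V := Fintype.ofFinite V
    rw [tsum_eq_sum (s := Finset.univ) (by simp)]
    simp [Nat.card_eq_fintype_card]
  rw [this, smul_eq_mul, ENNReal.inv_mul_cancel hcard (by simp)]

lemma Theta_dirac_empty {G V A : Type*} [MeasurableSpace A] [IsEmpty V]
    (σ : G → Equiv.Perm V) (η : Measure (V → A)) :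
    Theta σ η = 0 := by
  rw [Theta]
  have : (MeasureTheory.Measure.sum fun v : V => η.map (theta σ v)) = 0 := by
    ext s hs
    rw [Measure.sum_apply _ hs]
    simp
  rw [this, smul_zero]

lemma distr_prob {G : Type*} [Group G] {X A : Type*} [MeasurableSpace X] [MeasurableSpace A]
    [MulAction G X] (μ : Measure X) [IsProbabilityMeasure μ] (hact : IsPmpAction G μ)
    {f : X → A} (hf : Measurable f) :
    IsProbabilityMeasure (distr G μ f) := by
  have hm : Measurable (obsG G f) :=
    measurable_pi_lambda _ fun g => hf.comp (hact g).measurable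
  exact Measure.isProbabilityMeasure_map hm.aemeasurable

lemma exists_strictMono_subseq {P : ℕ → ℕ → Prop} (h : ∀ n N, ∃ i, N ≤ i ∧ P n i) :
    ∃ ψ : ℕ → ℕ, StrictMono ψ ∧ ∀ n, P n (ψ n) := by
  choose g hg1 hg2 using h
  let ψ : ℕ → ℕ := fun n => Nat.rec (g 0 0) (fun n ih => g (n + 1) (ih + 1)) n
  have hψsucc : ∀ n, ψ (n + 1) = g (n + 1) (ψ n + 1) := fun n => rfl
  refine ⟨ψ, strictMono_nat_of_lt_succ fun n => ?_, fun n => ?_⟩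
  · rw [hψsucc]
    exact lt_of_lt_of_le (Nat.lt_succ_self _) (hg1 (n + 1) (ψ n + 1))
  · cases n with
    | zero => exact hg2 0 0
    | succ n => rw [hψsucc]; exact hg2 (n + 1) (ψ n + 1)

end ThetaAux
/-- If `T₁` is weakly contained in `T₂` and `T₂` is sofic, then
`T₁` is sofic. -/
theorem weaklyContained_sofic {G : Type*} [Group G] [Countable G]
    (γ : ℕ → G) (hγ : IsEnumeration γ) (hG : SoficGroup G)
    {X₁ X₂ : Type*} [MeasurableSpace X₁] [MeasurableSpace X₂]
    [StandardBorelSpace X₁] [StandardBorelSpace X₂] [MulAction G X₁] [MulAction G X₂]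
    (μ₁ : Measure X₁) (μ₂ : Measure X₂)
    [IsProbabilityMeasure μ₁] [IsProbabilityMeasure μ₂]
    (hact₁ : IsPmpAction G μ₁) (hact₂ : IsPmpAction G μ₂)
    (hwc : WeaklyContained G γ μ₁ μ₂) (hsofic : SoficAction G γ μ₂) :
    SoficAction G γ μ₁ := by
  classical
  obtain ⟨V, σ, hfin, hsapprox, hweak⟩ := hsofic
  refine ⟨V, σ, hfin, hsapprox, ?_⟩
  intro A _ _ _ f₁ hf₁
  haveI : ∀ i, Finite (V i) := hfin
  have hX₁ : Nonempty X₁ := by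
    by_contra h
    rw [not_nonempty_iff] at h
    have h1 : μ₁ Set.univ = 1 := MeasureTheory.measure_univ
    rw [Set.univ_eq_empty_iff.mpr h, MeasureTheory.measure_empty] at h1
    exact zero_ne_one h1
  haveI hA : Nonempty A := ⟨f₁ hX₁.some⟩
  haveI : IsProbabilityMeasure (distr G μ₁ f₁) := distr_prob μ₁ hact₁ hf₁
  have hch : ∀ n : ℕ, ∃ f₂ : X₂ → A, Measurable f₂ ∧
      kantorovich γ (distr G μ₂ f₂) (distr G μ₁ f₁) < 1 / ((n : ℝ) + 1) :=
    fun n => hwc A f₁ hf₁ (1 / ((n : ℝ) + 1)) (by positivity)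
  choose f₂ hf₂m hf₂d using hch
  have hP : ∀ n N : ℕ, ∃ i, N ≤ i ∧ ∃ τ : V i → A,
      kantorovich γ (Theta (σ i) (MeasureTheory.Measure.dirac τ)) (distr G μ₁ f₁)
        < 2 / ((n : ℝ) + 1) := by
    intro n N
    obtain ⟨φ, hφ, τ, htend⟩ := hweak A (f₂ n) (hf₂m n)
    haveI : IsProbabilityMeasure (distr G μ₂ (f₂ n)) := distr_prob μ₂ hact₂ (hf₂m n)
    have hev : ∀ᶠ j in atTop,
        kantorovich γ (Theta (σ (φ j)) (MeasureTheory.Measure.dirac (τ j)))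
          (distr G μ₂ (f₂ n)) < 1 / ((n : ℝ) + 1) :=
      htend.eventually (gt_mem_nhds (show (0 : ℝ) < 1 / ((n : ℝ) + 1) by positivity))
    obtain ⟨J, hJ1, hJ2⟩ := (hev.and (eventually_ge_atTop N)).exists
    refine ⟨φ J, le_trans hJ2 hφ.le_apply, τ J, ?_⟩
    have h2eq : (2 : ℝ) / ((n : ℝ) + 1) = 1 / ((n : ℝ) + 1) + 1 / ((n : ℝ) + 1) := by
      ring
    rcases isEmpty_or_nonempty (V (φ J)) with hV | hV
    · rw [Theta_dirac_empty, kantorovich_zero_left]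
      positivity
    · haveI := Theta_dirac_prob (σ (φ J)) (τ J)
      have htri := kantorovich_triangle γ
        (Theta (σ (φ J)) (MeasureTheory.Measure.dirac (τ J)))
        (distr G μ₂ (f₂ n)) (distr G μ₁ f₁)
      have hd := hf₂d n
      rw [h2eq]
      linarith
  obtain ⟨ψ, hψmono, hψP⟩ := exists_strictMono_subseq hP
  choose τ hτ using hψP
  refine ⟨ψ, hψmono, τ, ?_⟩
  have hlim : Tendsto (fun n : ℕ => 2 / ((n : ℝ) + 1)) atTop (𝓝 0) := by
    have := tendsto_one_div_add_atTop_nhds_zero_nat.const_mul (2 : ℝ)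
    simpa [div_eq_mul_inv, mul_comm] using this
  refine squeeze_zero (fun n => kantorovich_nonneg _ _ _) (fun n => (hτ n).le) hlim

end SoficPaper
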